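/- For the resonant normal form H(I,φ) = εI + AI^2 + BI^{3/2}cos(3φ) with ε ≠ 0, the zeroth-order twist at the origin is τ₀ = 2A - 3B²/(2ε), and the first-order twist is τ₁ = (3/2)(B²/ε³)(8εA - 3B²). -/

import Mathlib

open Complex Filter

set_option maxHeartbeats 1000000 in
/-- Twists of the resonant normal form `H = εI + AI² + BI^{3/2}cos 3φ`, `ε ≠ 0`.
With `R(z) = B²z³ - (εz + Az²)²` (the `h = 0` curve `y² = Q² - (h-P)²`) and
`z·u(z)` the branch of `√R` with `u 0 = iε`, the residues at `z = 0` of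
`-P/y³` and of `3Q²/y⁵ - 2/y³` give `J''(0) = i·Res₂` and `J'''(0) = i·Res₃`,
and the twists are `τ₀ = -ε³J''(0) = 2A - 3B²/(2ε)` and
`τ₁ = ε⁴(3εJ''(0)² - J'''(0)) = (3/2)(B²/ε³)(8εA - 3B²)`. -/
theorem stmt3 (A B ε : ℝ) (hε : ε ≠ 0) (u : ℂ → ℂ)
    (hu : AnalyticAt ℂ u 0) (hu0 : u 0 = I * ε)
    (hR : ∀ᶠ z in nhds (0:ℂ),
      (z * u z)^2 = (B:ℂ)^2 * z^3 - ((ε:ℂ)*z + (A:ℂ)*z^2)^2) :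
    -- residue of `-P(z)/R(z)^{3/2} = -P(z)/(z³ u(z)³)` at `z = 0`
    let res2 : ℂ := (1/2) *
      iteratedDeriv 2 (fun z => -((ε:ℂ)*z + (A:ℂ)*z^2) / (u z)^3) 0
    -- residue of `3Q(z)²/R(z)^{5/2} - 2/R(z)^{3/2} = 3B²/(z²u⁵) - 2/(z³u³)` at `z = 0`
    let res3 : ℂ := iteratedDeriv 1 (fun z => 3*(B:ℂ)^2 / (u z)^5) 0
      + (1/2) * iteratedDeriv 2 (fun z => -2 / (u z)^3) 0
    let J2 : ℂ := I * res2   -- J''(0)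
    let J3 : ℂ := I * res3   -- J'''(0)
    (-(ε:ℂ)^3 * J2 = ((2*A - 3*B^2/(2*ε) : ℝ) : ℂ) ∧
     (ε:ℂ)^4 * (3*(ε:ℂ)*J2^2 - J3) = (((3/2) * (B^2/ε^3) * (8*ε*A - 3*B^2) : ℝ) : ℂ)) := by
  intro res2 res3 J2 J3
  have hεC : (ε:ℂ) ≠ 0 := Complex.ofReal_ne_zero.mpr hε
  have hu0ne : u 0 ≠ 0 := by rw [hu0]; exact mul_ne_zero Complex.I_ne_zero hεC
  -- analyticity of u and deriv u near 0
  obtain ⟨s, hs_mem, hs⟩ := eventually_iff_exists_mem.mp hu.eventually_analyticAt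
  have hsOn : AnalyticOnNhd ℂ u s := hs
  have hAu : ∀ᶠ z in nhds (0:ℂ), AnalyticAt ℂ u z := hu.eventually_analyticAt
  set w := deriv u with hwdef
  have hAw : ∀ᶠ z in nhds (0:ℂ), AnalyticAt ℂ w z :=
    eventually_iff_exists_mem.mpr ⟨s, hs_mem, fun z hz => hsOn.deriv z hz⟩
  have hne : ∀ᶠ z in nhds (0:ℂ), u z ≠ 0 := hu.continuousAt.eventually_ne hu0ne
  have hw0 : AnalyticAt ℂ w 0 := hsOn.deriv 0 (mem_of_mem_nhds hs_mem)
  -- key : u² = B²z - (ε+Az)² near 0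
  have key : ∀ᶠ z in nhds (0:ℂ),
      u z ^ 2 = (B:ℂ)^2 * z - ((ε:ℂ) + A*z)^2 := by
    filter_upwards [hR] with z hz
    rcases eq_or_ne z 0 with rfl | h0
    · rw [hu0]
      have h3 : (I * (ε:ℂ))^2 = I^2 * ε^2 := by ring
      rw [h3, Complex.I_sq]; ring
    · have h2 : z^2 * (u z ^ 2) = z^2 * ((B:ℂ)^2 * z - ((ε:ℂ) + A*z)^2) := by
        linear_combination hz
      exact mul_left_cancel₀ (pow_ne_zero 2 h0) h2
  -- derivative of the RHS polynomial
  have hg : ∀ z : ℂ, HasDerivAt (fun z => (B:ℂ)^2 * z - ((ε:ℂ) + A*z)^2)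
      ((B:ℂ)^2 - 2*((ε:ℂ) + A*z)*A) z := by
    intro z
    have h1 : HasDerivAt (fun z : ℂ => (ε:ℂ) + A*z) (A:ℂ) z := by
      simpa using (((hasDerivAt_id z).const_mul (A:ℂ)).const_add (ε:ℂ))
    have h2 := ((hasDerivAt_id z).const_mul ((B:ℂ)^2)).sub (h1.pow 2)
    refine h2.congr_deriv ?_
    push_cast; ring
  -- first relation: 2(Iε)(w 0) = B² - 2Aε
  have hrel1 : 2*(I*(ε:ℂ))*(w 0) = (B:ℂ)^2 - 2*A*ε := by
    have hL : HasDerivAt (fun z => u z ^ 2) (2 * u 0 * w 0) 0 := by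
      have := hu.differentiableAt.hasDerivAt.pow 2
      refine this.congr_deriv ?_
      try { push_cast; ring }
    have heq : deriv (fun z => u z ^ 2) 0
        = deriv (fun z => (B:ℂ)^2 * z - ((ε:ℂ) + A*z)^2) 0 :=
      Filter.EventuallyEq.deriv_eq key
    rw [hL.deriv, (hg 0).deriv, hu0] at heq
    linear_combination heq
  -- second relation
  have e2 : (fun z => 2 * u z * w z) =ᶠ[nhds (0:ℂ)]
      (fun z => (B:ℂ)^2 - 2*((ε:ℂ) + A*z)*A) := by
    have hkd := Filter.EventuallyEq.deriv
      (key : (fun z => u z ^ 2) =ᶠ[nhds (0:ℂ)] fun z => (B:ℂ)^2 * z - ((ε:ℂ) + A*z)^2)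
    filter_upwards [hkd, hAu] with z h1z h2z
    have hL : HasDerivAt (fun z => u z ^ 2) (2 * u z * w z) z := by
      have := h2z.differentiableAt.hasDerivAt.pow 2
      refine this.congr_deriv ?_
      try { push_cast; ring }
    rw [← hL.deriv, h1z, (hg z).deriv]
  have hrel2 : 2*((w 0)*(w 0) + (I*(ε:ℂ))*(deriv w 0)) = -(2*(A:ℂ)*A) := by
    have hL : HasDerivAt (fun z => 2 * u z * w z)
        (2*((w 0)*(w 0) + (u 0)*(deriv w 0))) 0 := by
      have h := (hu.differentiableAt.hasDerivAt.mul hw0.differentiableAt.hasDerivAt).const_mul (2:ℂ)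
      rw [show (fun z => 2 * u z * w z) = (fun y => 2 * (u y * w y)) from funext fun y => by ring]
      refine h.congr_deriv ?_
      try rw [hwdef]
      try ring
    have hRd : HasDerivAt (fun z => (B:ℂ)^2 - 2*((ε:ℂ) + A*z)*A) (-(2*(A:ℂ)*A)) 0 := by
      have h1 : HasDerivAt (fun z : ℂ => (ε:ℂ) + A*z) (A:ℂ) 0 := by
        simpa using (((hasDerivAt_id (0:ℂ)).const_mul (A:ℂ)).const_add (ε:ℂ))
      have h2 := ((h1.const_mul (2:ℂ)).mul_const (A:ℂ)).const_sub ((B:ℂ)^2)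
      refine h2.congr_deriv ?_
      try ring
    have heq := Filter.EventuallyEq.deriv_eq e2
    rw [hL.deriv, hRd.deriv, hu0] at heq
    linear_combination heq
  -- solve for w 0 and deriv w 0
  set a1 := w 0 with ha1def
  set a2 := deriv w 0 with ha2def
  have ha1 : a1 = I*(2*(A:ℂ)*ε - B^2)/(2*ε) := by
    rw [eq_div_iff (by simpa using hεC : (2*(ε:ℂ)) ≠ 0)]
    linear_combination (-I)*hrel1 + (2*(ε:ℂ)*a1)*Complex.I_sq
  have ha2 : a2 = I*(B:ℂ)^2*(4*(A:ℂ)*ε - B^2)/(4*ε^3) := by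
    rw [eq_div_iff (by simpa using pow_ne_zero 3 hεC : (4*(ε:ℂ)^3) ≠ 0)]
    rw [ha1] at hrel2
    field_simp at hrel2
    linear_combination (-I)*hrel2 +
      (I*(2*(A:ℂ)*ε - B^2)^2 + 4*(ε:ℂ)^3*a2)*Complex.I_sq
  -- pointwise derivative facts
  have hu'0 : HasDerivAt u a1 0 := hu.differentiableAt.hasDerivAt
  have hw'0 : HasDerivAt w a2 0 := hw0.differentiableAt.hasDerivAt
  have hu30 : HasDerivAt (fun z => (u z)^3) (3*(u 0)^2*a1) 0 := by
    have := hu'0.pow 3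
    refine this.congr_deriv ?_
    try { push_cast; ring }
  have hP2 : HasDerivAt (fun z => 3*(u z)^2*(w z)) ((3*(2*(u 0)*a1))*a1 + (3*(u 0)^2)*a2) 0 := by
    have h1 : HasDerivAt (fun z => 3*(u z)^2) (3*(2*(u 0)*a1)) 0 := by
      have := (hu'0.pow 2).const_mul (3:ℂ)
      refine this.congr_deriv ?_
      try { push_cast; ring }
    exact h1.mul hw'0
  have hcd : ∀ z : ℂ, HasDerivAt (fun z => -((ε:ℂ)*z + (A:ℂ)*z^2)) (-((ε:ℂ) + 2*A*z)) z := by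
    intro z
    have h1 : HasDerivAt (fun z : ℂ => (ε:ℂ)*z) (ε:ℂ) z := by
      simpa using (hasDerivAt_id z).const_mul (ε:ℂ)
    have h2 : HasDerivAt (fun z : ℂ => (A:ℂ)*z^2) (2*(A:ℂ)*z) z := by
      have := (hasDerivAt_pow 2 z).const_mul (A:ℂ)
      refine this.congr_deriv ?_
      try { push_cast; ring }
    have := (h1.add h2).neg
    refine this.congr_deriv ?_
    try ring
  -- res2
  have hres2val : res2 = (1/2) * (-2*(A:ℂ)/(u 0)^3 + 6*(ε:ℂ)*a1/(u 0)^4) := by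
    have ef2 : deriv (fun z => -((ε:ℂ)*z + (A:ℂ)*z^2) / (u z)^3) =ᶠ[nhds (0:ℂ)]
        (fun z => ((-((ε:ℂ) + 2*A*z)) * (u z)^3
          - (-((ε:ℂ)*z + (A:ℂ)*z^2)) * (3*(u z)^2*(w z))) / ((u z)^3)^2) := by
      filter_upwards [hAu, hne] with z hz hz0
      have hu3 : HasDerivAt (fun z => (u z)^3) (3*(u z)^2*(w z)) z := by
        have := hz.differentiableAt.hasDerivAt.pow 3
        refine this.congr_deriv ?_
        try { push_cast; ring }
      exact ((hcd z).div hu3 (pow_ne_zero 3 hz0)).deriv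
    have h2d : iteratedDeriv 2 (fun z => -((ε:ℂ)*z + (A:ℂ)*z^2) / (u z)^3) 0
        = deriv (fun z => ((-((ε:ℂ) + 2*A*z)) * (u z)^3
          - (-((ε:ℂ)*z + (A:ℂ)*z^2)) * (3*(u z)^2*(w z))) / ((u z)^3)^2) 0 := by
      rw [iteratedDeriv_succ, iteratedDeriv_one]
      exact Filter.EventuallyEq.deriv_eq ef2
    -- derivative of F2 at 0
    have hq1 : HasDerivAt (fun z => -((ε:ℂ) + 2*A*z)) (-(2*(A:ℂ))) 0 := by
      have := (((hasDerivAt_id (0:ℂ)).const_mul (2*(A:ℂ))).const_add (ε:ℂ)).neg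
      refine this.congr_deriv ?_
      ring
    have hnum : HasDerivAt (fun z => (-((ε:ℂ) + 2*A*z)) * (u z)^3
          - (-((ε:ℂ)*z + (A:ℂ)*z^2)) * (3*(u z)^2*(w z)))
        ((-(2*(A:ℂ)))*(u 0)^3 + (-((ε:ℂ) + 2*A*0))*(3*(u 0)^2*a1)
          - ((-((ε:ℂ) + 2*A*0))*(3*(u 0)^2*a1)
            + (-((ε:ℂ)*0 + (A:ℂ)*0^2))*((3*(2*(u 0)*a1))*a1 + (3*(u 0)^2)*a2))) 0 :=
      (hq1.mul hu30).sub ((hcd 0).mul hP2)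
    have hden : HasDerivAt (fun z => ((u z)^3)^2) ((2:ℕ)*((u 0)^3)^(2-1)*(3*(u 0)^2*a1)) 0 :=
      hu30.pow 2
    have hdenne : ((u 0)^3)^2 ≠ 0 := pow_ne_zero 2 (pow_ne_zero 3 hu0ne)
    have hF2 := hnum.div hden hdenne
    have : res2 = (1/2) * iteratedDeriv 2
        (fun z => -((ε:ℂ)*z + (A:ℂ)*z^2) / (u z)^3) 0 := rfl
    rw [this, h2d]; erw [hF2.deriv]
    rw [← ha1def]
    field_simp [hu0ne]
    try ring
  -- res3
  have hres3val : res3 = -15*(B:ℂ)^2*a1/(u 0)^6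
      + (1/2) * (6*a2/(u 0)^4 - 24*a1^2/(u 0)^5) := by
    -- first part
    have hpart1 : iteratedDeriv 1 (fun z => 3*(B:ℂ)^2 / (u z)^5) 0
        = -15*(B:ℂ)^2*a1/(u 0)^6 := by
      rw [iteratedDeriv_one]
      have hu5 : HasDerivAt (fun z => (u z)^5) (5*(u 0)^4*a1) 0 := by
        have := hu'0.pow 5
        refine this.congr_deriv ?_
        try { push_cast; ring }
      have h := (hasDerivAt_const (0:ℂ) (3*(B:ℂ)^2)).div hu5 (pow_ne_zero 5 hu0ne)
      erw [h.deriv]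
      field_simp [hu0ne]
      try ring
    -- second part
    have ef3 : deriv (fun z => -2 / (u z)^3) =ᶠ[nhds (0:ℂ)]
        (fun z => (0 * (u z)^3 - (-2) * (3*(u z)^2*(w z))) / ((u z)^3)^2) := by
      filter_upwards [hAu, hne] with z hz hz0
      have hu3 : HasDerivAt (fun z => (u z)^3) (3*(u z)^2*(w z)) z := by
        have := hz.differentiableAt.hasDerivAt.pow 3
        refine this.congr_deriv ?_
        try { push_cast; ring }
      exact ((hasDerivAt_const z (-2:ℂ)).div hu3 (pow_ne_zero 3 hz0)).deriv
    have h2d : iteratedDeriv 2 (fun z => -2 / (u z)^3) 0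
        = deriv (fun z => (0 * (u z)^3 - (-2) * (3*(u z)^2*(w z))) / ((u z)^3)^2) 0 := by
      rw [iteratedDeriv_succ, iteratedDeriv_one]
      exact Filter.EventuallyEq.deriv_eq ef3
    have hnum : HasDerivAt (fun z => 0 * (u z)^3 - (-2) * (3*(u z)^2*(w z)))
        (0*(3*(u 0)^2*a1) - (-2)*((3*(2*(u 0)*a1))*a1 + (3*(u 0)^2)*a2)) 0 := by
      have h1 : HasDerivAt (fun z => (0:ℂ) * (u z)^3) (0*(3*(u 0)^2*a1)) 0 := by
        have := hu30.const_mul (0:ℂ)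
        convert this using 1
      have h2 : HasDerivAt (fun z => (-2:ℂ) * (3*(u z)^2*(w z)))
          ((-2)*((3*(2*(u 0)*a1))*a1 + (3*(u 0)^2)*a2)) 0 := hP2.const_mul (-2:ℂ)
      exact h1.sub h2
    have hden : HasDerivAt (fun z => ((u z)^3)^2) ((2:ℕ)*((u 0)^3)^(2-1)*(3*(u 0)^2*a1)) 0 :=
      hu30.pow 2
    have hdenne : ((u 0)^3)^2 ≠ 0 := pow_ne_zero 2 (pow_ne_zero 3 hu0ne)
    have hF3 := hnum.div hden hdenne
    have : res3 = iteratedDeriv 1 (fun z => 3*(B:ℂ)^2 / (u z)^5) 0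
      + (1/2) * iteratedDeriv 2 (fun z => -2 / (u z)^3) 0 := rfl
    rw [this, hpart1, h2d]; erw [hF3.deriv]; rw [← ha1def]
    field_simp [hu0ne]
    try ring
  -- final algebra
  have hIe : ∀ n : ℕ, (I:ℂ)^(2*n) = (-1:ℂ)^n := fun n => by rw [pow_mul, Complex.I_sq]
  have hI6 : (I:ℂ)^6 = -1 := by have := hIe 3; norm_num at this; exact this
  have hI12 : (I:ℂ)^12 = 1 := by have := hIe 6; norm_num at this; exact this
  have hI22 : (I:ℂ)^22 = -1 := by have := hIe 11; norm_num at this; exact this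
  have hI30 : (I:ℂ)^30 = -1 := by have := hIe 15; norm_num at this; exact this
  constructor
  · show -(ε:ℂ)^3 * (I * res2) = _
    rw [hres2val, hu0, ha1]
    push_cast
    field_simp [Complex.I_ne_zero]
    ring_nf
    simp [Complex.I_sq]
  · show (ε:ℂ)^4 * (3*(ε:ℂ)*(I * res2)^2 - I * res3) = _
    rw [hres2val, hres3val, hu0, ha1, ha2]
    push_cast
    field_simp [Complex.I_ne_zero]
    ring_nf
    simp [Complex.I_sq]
    ring_nf
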